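/- Let ι be a finite nonempty index set, let v : ι → ℂ^d be unit vectors, and let p : ι → ℝ satisfy p_i ≥ 0 for all i and ∑_i p_i = 1. Let ρ be the d × d complex matrix ρ = ∑_i p_i · v_i v_i†, which is Hermitian, and let μ_1, …, μ_d be its eigenvalues (with multiplicity). Then −∑_k μ_k log μ_k ≤ −∑_i p_i log p_i (with the convention 0 log 0 = 0). -/

import Mathlib

open scoped ComplexConjugate
open Matrix

lemma sum_mulVec' {ι n : Type*} [Fintype ι] [Fintype n] (M : ι → Matrix n n ℂ) (x : n → ℂ) :
    (∑ i, M i) *ᵥ x = ∑ i, (M i *ᵥ x) := by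
  ext a
  simp only [Matrix.mulVec, dotProduct, Matrix.sum_apply, Finset.sum_apply,
    Finset.sum_mul]
  rw [Finset.sum_comm]

lemma rank1_mulVec {d : ℕ} (v x : Fin d → ℂ) :
    (Matrix.of fun a b => v a * star (v b)) *ᵥ x = (∑ b, conj (v b) * x b) • v := by
  ext a
  simp only [Matrix.mulVec, dotProduct, Matrix.of_apply, Pi.smul_apply, smul_eq_mul,
    Finset.sum_mul, Complex.star_def]
  exact Finset.sum_congr rfl fun b _ => by ring

lemma spectral' {d : ℕ} (A : Matrix (Fin d) (Fin d) ℂ) (hA : A.IsHermitian) (k l : Fin d) :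
    ∑ a, conj (hA.eigenvectorBasis l a) * (A *ᵥ ⇑(hA.eigenvectorBasis k)) a
      = if l = k then (hA.eigenvalues k : ℂ) else 0 := by
  rw [hA.mulVec_eigenvectorBasis]
  have h2 := orthonormal_iff_ite.mp hA.eigenvectorBasis.orthonormal l k
  simp only [PiLp.inner_apply, RCLike.inner_apply, mul_comm _ ((starRingEnd ℂ) _)] at h2
  simp only [Pi.smul_apply, smul_eq_mul, Complex.real_smul]
  calc ∑ a, conj (hA.eigenvectorBasis l a) * ((hA.eigenvalues k : ℂ) * hA.eigenvectorBasis k a)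
      = (hA.eigenvalues k : ℂ) * ∑ a, conj (hA.eigenvectorBasis l a) * hA.eigenvectorBasis k a := by
        rw [Finset.mul_sum]; exact Finset.sum_congr rfl fun a _ => by ring
    _ = if l = k then (hA.eigenvalues k : ℂ) else 0 := by rw [h2]; split <;> simp

lemma expand' {ι : Type*} [Fintype ι] {d : ℕ} (v : ι → EuclideanSpace ℂ (Fin d))
    (p : ι → ℝ) (ρ : Matrix (Fin d) (Fin d) ℂ)
    (hρdef : ρ = ∑ i, (p i : ℂ) • Matrix.of (fun a b => v i a * star (v i b)))
    (x y : EuclideanSpace ℂ (Fin d)) :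
    ∑ a, conj (y a) * (ρ *ᵥ ⇑x) a
      = ∑ i, (p i : ℂ) * (∑ a, conj (y a) * v i a) * (∑ b, conj (v i b) * x b) := by
  subst hρdef
  rw [sum_mulVec']
  have h1 : ∀ i, ((p i : ℂ) • Matrix.of fun a b => v i a * star (v i b)) *ᵥ ⇑x
      = (p i : ℂ) • ((∑ b, conj (v i b) * x b) • (v i : Fin d → ℂ)) := by
    intro i
    rw [Matrix.smul_mulVec, rank1_mulVec]
  simp only [h1, Finset.sum_apply, Pi.smul_apply, smul_eq_mul, Finset.mul_sum]
  rw [Finset.sum_comm]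
  refine Finset.sum_congr rfl fun i _ => ?_
  simp only [Finset.mul_sum, Finset.sum_mul]
  rw [Finset.sum_comm]
  refine Finset.sum_congr rfl fun a _ => ?_
  exact Finset.sum_congr rfl fun b _ => by ring

theorem stmt5 {ι : Type*} [Fintype ι] [Nonempty ι] {d : ℕ}
    (v : ι → EuclideanSpace ℂ (Fin d)) (hv : ∀ i, ‖v i‖ = 1)
    (p : ι → ℝ) (hp : ∀ i, 0 ≤ p i) (hpsum : ∑ i, p i = 1)
    (ρ : Matrix (Fin d) (Fin d) ℂ)
    (hρdef : ρ = ∑ i, (p i : ℂ) • Matrix.of (fun a b => v i a * star (v i b)))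
    (hρ : ρ.IsHermitian) :
    -∑ k, hρ.eigenvalues k * Real.log (hρ.eigenvalues k) ≤
      -∑ i, p i * Real.log (p i) := by
  classical
  set μ : Fin d → ℝ := hρ.eigenvalues with hμdef
  set e := hρ.eigenvectorBasis with hedef
  set c : ι → Fin d → ℂ := fun i k => ∑ a, conj (e k a) * v i a with hcdef
  set r : ι → Fin d → ℝ := fun i k => p i * Complex.normSq (c i k) with hrdef
  -- conjugate identity
  have hconj : ∀ i k, (∑ b, conj (v i b) * (e k : EuclideanSpace ℂ (Fin d)) b) = conj (c i k) := by
    intro i k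
    rw [hcdef, map_sum]
    refine Finset.sum_congr rfl fun b _ => ?_
    rw [_root_.map_mul, Complex.conj_conj]
    ring
  -- Fact A
  have factA : ∀ k l, ∑ i, (p i : ℂ) * c i l * conj (c i k)
      = if l = k then (μ k : ℂ) else 0 := by
    intro k l
    have h2 := expand' v p ρ hρdef (e k) (e l)
    rw [spectral' ρ hρ k l] at h2
    refine Eq.trans ?_ h2.symm
    refine Finset.sum_congr rfl fun i _ => ?_
    rw [← hconj i k]
  have hrnn : ∀ i k, 0 ≤ r i k := fun i k => mul_nonneg (hp i) (Complex.normSq_nonneg _)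
  -- column sums: ∑ i, r i k = μ k
  have hcol : ∀ k, ∑ i, r i k = μ k := by
    intro k
    have h := factA k k
    rw [if_pos rfl] at h
    have : ∀ i, (p i : ℂ) * c i k * conj (c i k) = ((r i k : ℝ) : ℂ) := by
      intro i
      rw [mul_assoc, Complex.mul_conj, hrdef]
      push_cast
      ring
    rw [Finset.sum_congr rfl fun i _ => this i] at h
    exact_mod_cast h
  have hμnn : ∀ k, 0 ≤ μ k := by
    intro k
    rw [← hcol k]
    exact Finset.sum_nonneg fun i _ => hrnn i k
  have hμzero : ∀ k, μ k = 0 → ∀ i, r i k = 0 := by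
    intro k hk i
    have h := hcol k
    rw [hk] at h
    exact (Finset.sum_eq_zero_iff_of_nonneg (fun j _ => hrnn j k)).mp h i (Finset.mem_univ i)
  -- row sums: ∑ k, r i k = p i
  have hrow : ∀ i, ∑ k, r i k = p i := by
    intro i
    have h := e.sum_inner_mul_inner (v i) (v i)
    simp only [PiLp.inner_apply, RCLike.inner_apply, mul_comm _ ((starRingEnd ℂ) _)] at h
    have hvv : (∑ a, conj (v i a) * v i a) = ((1 : ℝ) : ℂ) := by
      have := @inner_self_eq_norm_sq_to_K ℂ _ _ _ _ (v i)
      simp only [PiLp.inner_apply, RCLike.inner_apply, mul_comm _ ((starRingEnd ℂ) _)] at this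
      rw [this, hv i]
      norm_num
    have hterm : ∀ k, (∑ a, conj (v i a) * e k a) * (∑ a, conj ((e k : EuclideanSpace ℂ (Fin d)) a) * v i a)
        = ((Complex.normSq (c i k) : ℝ) : ℂ) := by
      intro k
      rw [hconj i k]
      rw [show (∑ a, conj ((e k : EuclideanSpace ℂ (Fin d)) a) * v i a) = c i k from rfl]
      rw [mul_comm, Complex.mul_conj]
    rw [Finset.sum_congr rfl fun k _ => hterm k, hvv] at h
    have h2 : ∑ k, Complex.normSq (c i k) = 1 := by exact_mod_cast h
    rw [hrdef]
    simp only
    rw [← Finset.mul_sum, h2, mul_one]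
  -- orthonormal family
  set u : {k : Fin d // μ k ≠ 0} → EuclideanSpace ℂ ι :=
    fun k => WithLp.toLp 2 (fun i => ((Real.sqrt (p i) : ℂ) * c i k.1) / (Real.sqrt (μ k.1) : ℂ)) with hudef
  have huorth : Orthonormal ℂ u := by
    rw [orthonormal_iff_ite]
    intro k l
    simp only [PiLp.inner_apply, RCLike.inner_apply, hudef, WithLp.ofLp_toLp, mul_comm _ ((starRingEnd ℂ) _)]
    have hterm : ∀ i, conj (((Real.sqrt (p i) : ℂ) * c i k.1) / (Real.sqrt (μ k.1) : ℂ))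
        * (((Real.sqrt (p i) : ℂ) * c i l.1) / (Real.sqrt (μ l.1) : ℂ))
        = ((p i : ℂ) * c i l.1 * conj (c i k.1)) / ((Real.sqrt (μ k.1) : ℂ) * (Real.sqrt (μ l.1) : ℂ)) := by
      intro i
      have hsq : ((Real.sqrt (p i) : ℂ)) * ((Real.sqrt (p i) : ℂ)) = (p i : ℂ) := by
        rw [← Complex.ofReal_mul, Real.mul_self_sqrt (hp i)]
      simp only [map_mul, map_div₀, Complex.conj_ofReal]
      rw [← hsq]
      ring
    rw [Finset.sum_congr rfl fun i _ => hterm i, ← Finset.sum_div, factA k.1 l.1]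
    by_cases hkl : k = l
    · subst hkl
      rw [if_pos rfl, if_pos rfl, ← Complex.ofReal_mul, Real.mul_self_sqrt (hμnn k.1)]
      rw [div_self (by exact_mod_cast k.2)]
    · have : k.1 ≠ l.1 := fun h => hkl (Subtype.ext h)
      rw [if_neg (Ne.symm this), if_neg hkl, zero_div]
  -- B matrix
  set B : ι → Fin d → ℝ := fun i k => if μ k = 0 then 0 else r i k / μ k with hBdef
  have hBnn : ∀ i k, 0 ≤ B i k := by
    intro i k
    rw [hBdef]
    by_cases h : μ k = 0
    · simp [h]
    · simp only [if_neg h]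
      exact div_nonneg (hrnn i k) (hμnn k)
  have hμB : ∀ i k, μ k * B i k = r i k := by
    intro i k
    rw [hBdef]
    by_cases h : μ k = 0
    · simp [h, hμzero k h i]
    · simp only [if_neg h]
      field_simp
  have hBcol : ∀ k, μ k ≠ 0 → ∑ i, B i k = 1 := by
    intro k hk
    simp only [hBdef, if_neg hk]
    rw [← Finset.sum_div, hcol k, div_self hk]
  -- Bessel: row sums ≤ 1
  have hBrow : ∀ i, ∑ k, B i k ≤ 1 := by
    intro i
    have hb := huorth.sum_inner_products_le (s := Finset.univ) (EuclideanSpace.single i 1)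
    have hnorm : ‖EuclideanSpace.single i (1:ℂ)‖ = 1 := by
      rw [EuclideanSpace.norm_single, norm_one]
    rw [hnorm, one_pow] at hb
    have hterm : ∀ k : {k : Fin d // μ k ≠ 0},
        ‖(inner ℂ (u k) (EuclideanSpace.single i (1:ℂ)) : ℂ)‖ ^ 2 = B i k.1 := by
      intro k
      have h1 : (inner ℂ (u k) (EuclideanSpace.single i (1:ℂ)) : ℂ) = conj (u k i) := by
        simp only [PiLp.inner_apply, RCLike.inner_apply, EuclideanSpace.single_apply]
        simp [Finset.sum_ite_eq]
      rw [h1, RCLike.norm_conj, Complex.sq_norm]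
      · rw [hudef]
        simp only [WithLp.ofLp_toLp, Complex.normSq_div, Complex.normSq_mul, Complex.normSq_ofReal]
        rw [Real.mul_self_sqrt (hp i), Real.mul_self_sqrt (hμnn k.1), hBdef]
        simp only [if_neg k.2, hrdef]
    rw [Finset.sum_congr rfl fun k _ => hterm k] at hb
    have hsum : ∑ k, B i k = ∑ k : {k : Fin d // μ k ≠ 0}, B i k.1 := by
      rw [← Finset.sum_filter_of_ne (p := fun k => μ k ≠ 0) (fun k _ hk => by
        intro h0
        apply hk
        rw [hBdef]
        simp [h0])]
      rw [Finset.sum_subtype (p := fun k => μ k ≠ 0) _ (fun k => by simp) (fun k => B i k)]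
    rw [hsum]
    exact hb
  -- p as a mixture of eigenvalues
  have hpB : ∀ i, p i = ∑ k, B i k * μ k := by
    intro i
    rw [← hrow i]
    exact Finset.sum_congr rfl fun k _ => by rw [← hμB i k]; ring
  -- Jensen
  have jensen : ∀ i, ∑ k, B i k * Real.negMulLog (μ k) ≤ Real.negMulLog (p i) := by
    intro i
    have h := Real.concaveOn_negMulLog.map_add_sum_le (t := Finset.univ) (w := B i) (p := μ)
        (v := 1 - ∑ k, B i k) (q := 0)
        (fun k _ => hBnn i k) (by ring) (fun k _ => Set.mem_Ici.mpr (hμnn k))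
        (by linarith [hBrow i]) (Set.mem_Ici.mpr le_rfl)
    simp only [smul_eq_mul, Real.negMulLog_zero, mul_zero, zero_add, add_zero] at h
    rw [← hpB i] at h
    exact h
  -- final assembly
  have key : ∑ k, Real.negMulLog (μ k) ≤ ∑ i, Real.negMulLog (p i) := by
    calc ∑ k, Real.negMulLog (μ k) = ∑ k, (∑ i, B i k) * Real.negMulLog (μ k) := by
          refine Finset.sum_congr rfl fun k _ => ?_
          by_cases h : μ k = 0
          · simp [h]
          · rw [hBcol k h, one_mul]
      _ = ∑ i, ∑ k, B i k * Real.negMulLog (μ k) := by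
          simp only [Finset.sum_mul]
          rw [Finset.sum_comm]
      _ ≤ ∑ i, Real.negMulLog (p i) := Finset.sum_le_sum fun i _ => jensen i
  simp only [Real.negMulLog, neg_mul, Finset.sum_neg_distrib] at key
  exact key
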